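/- arXiv:1902.08878 — 8 statements merged into one kernel-verified Lean document; each statement's English description precedes it below -/
import Mathlib

section
/- Let T ≥ 0 be a real number, let R_d be a 3×3 real orthogonal matrix, let a = (a_x, a_y, a_z) ∈ ℝ³ be a unit vector, and let ζ ∈ ℝ. Let R(a, ζ) := I₃ + sin ζ · A + (1 − cos ζ) · A² be the Rodrigues rotation matrix about axis a through angle ζ, where A is the 3×3 skew-symmetric cross-product matrix of a. Then the Euclidean norm satisfies ‖T · R_d · (R(a, ζ)ᵀ − I₃) · ẑ‖ ≤ √6 · T · |ζ|, where ẑ := (0, 0, 1). -/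
open Matrix

/-- Euclidean norm on `ℝ³` (as `Fin 3 → ℝ`). -/
noncomputable def norm3 (v : Fin 3 → ℝ) : ℝ := Real.sqrt (∑ i, v i ^ 2)

/-- The skew-symmetric cross-product matrix of `a`, satisfying `A *ᵥ v = a ×₃ v`. -/
def skewMat (a : Fin 3 → ℝ) : Matrix (Fin 3) (Fin 3) ℝ :=
  !![0, -a 2, a 1; a 2, 0, -a 0; -a 1, a 0, 0]

/-- The Rodrigues rotation matrix about the axis `a` through the angle `ζ`. -/
noncomputable def rodrigues (a : Fin 3 → ℝ) (ζ : ℝ) : Matrix (Fin 3) (Fin 3) ℝ :=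
  1 + Real.sin ζ • skewMat a + (1 - Real.cos ζ) • (skewMat a * skewMat a)

lemma aux_bound (s c a0 a1 a2 ζ : ℝ) (hs : s^2 ≤ ζ^2) (hc : c^2 ≤ ζ^2)
    (hu : a0^2 + a1^2 + a2^2 = 1) :
    (-s*a1 + c*(a0*a2))^2 + (s*a0 + c*(a1*a2))^2 + (c*(-(a0^2) - a1^2))^2 ≤ 6*ζ^2 := by
  have key : (-s*a1 + c*(a0*a2))^2 + (s*a0 + c*(a1*a2))^2 + (c*(-(a0^2) - a1^2))^2
      = s^2*(a0^2 + a1^2) + c^2*a2^2*(a0^2 + a1^2) + c^2*(a0^2 + a1^2)^2 := by ring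
  have hp0 : (0:ℝ) ≤ a0^2 + a1^2 := by positivity
  have hp1 : a0^2 + a1^2 ≤ 1 := by nlinarith [sq_nonneg a2]
  have ha2 : a2^2 ≤ 1 := by nlinarith [sq_nonneg a0, sq_nonneg a1]
  have b1 : s^2 * (a0^2 + a1^2) ≤ ζ^2 := by
    nlinarith [mul_le_mul_of_nonneg_left hp1 (sq_nonneg s)]
  have b2 : c^2 * a2^2 * (a0^2 + a1^2) ≤ ζ^2 := by
    nlinarith [mul_le_mul_of_nonneg_left hp1 (mul_nonneg (sq_nonneg c) (sq_nonneg a2)),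
      mul_le_mul_of_nonneg_left ha2 (sq_nonneg c)]
  have b3 : c^2 * (a0^2 + a1^2)^2 ≤ ζ^2 := by
    nlinarith [mul_le_mul_of_nonneg_left (mul_le_one₀ hp1 hp0 hp1) (sq_nonneg c),
      sq_nonneg (a0^2 + a1^2)]
  have hz : (0:ℝ) ≤ ζ^2 := sq_nonneg ζ
  linarith [key.le]

lemma aux_orth (Rd : Matrix (Fin 3) (Fin 3) ℝ) (hRd : Rdᵀ * Rd = 1)
    (T u0 u1 u2 : ℝ) :
    (T * (Rd 0 0 * u0 + Rd 0 1 * u1 + Rd 0 2 * u2))^2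
      + (T * (Rd 1 0 * u0 + Rd 1 1 * u1 + Rd 1 2 * u2))^2
      + (T * (Rd 2 0 * u0 + Rd 2 1 * u1 + Rd 2 2 * u2))^2
      = T^2 * (u0^2 + u1^2 + u2^2) := by
  have h00 := congrFun (congrFun hRd 0) 0
  have h01 := congrFun (congrFun hRd 0) 1
  have h02 := congrFun (congrFun hRd 0) 2
  have h11 := congrFun (congrFun hRd 1) 1
  have h12 := congrFun (congrFun hRd 1) 2
  have h22 := congrFun (congrFun hRd 2) 2
  simp [Matrix.mul_apply, Fin.sum_univ_three, Matrix.one_apply] at h00 h01 h02 h11 h12 h22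
  linear_combination (T^2 * u0^2) * h00 + (T^2 * u1^2) * h11 + (T^2 * u2^2) * h22
    + (2*T^2 * u0 * u1) * h01 + (2*T^2 * u0 * u2) * h02 + (2*T^2 * u1 * u2) * h12


/-- Lemma 2: the exogenous disturbance `δ = T R_d (R̃ᵀ - I₃) ẑ` is bounded by `√6 T |ζ̃|`. -/
theorem stmt0 (T : ℝ) (hT : 0 ≤ T) (Rd : Matrix (Fin 3) (Fin 3) ℝ)
    (hRd : Rdᵀ * Rd = 1) (a : Fin 3 → ℝ) (ha : norm3 a = 1) (ζ : ℝ) :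
    norm3 (T • (Rd * ((rodrigues a ζ)ᵀ - 1)) *ᵥ ![0, 0, 1]) ≤ Real.sqrt 6 * T * |ζ| := by
  have hunit : a 0 ^ 2 + a 1 ^ 2 + a 2 ^ 2 = 1 := by
    have : Real.sqrt (a 0 ^ 2 + a 1 ^ 2 + a 2 ^ 2) = 1 := by
      simpa [norm3, Fin.sum_univ_three] using ha
    nlinarith [Real.sq_sqrt (by positivity : (0:ℝ) ≤ a 0 ^ 2 + a 1 ^ 2 + a 2 ^ 2)]
  have hs : Real.sin ζ ^ 2 ≤ ζ ^ 2 := Real.sin_sq_le_sq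
  have hc0 : 0 ≤ 1 - Real.cos ζ := by nlinarith [Real.cos_le_one ζ]
  have hcabs : 1 - Real.cos ζ ≤ |ζ| := by
    have h1 : 1 - Real.cos ζ = 2 * Real.sin (ζ/2) ^ 2 := by
      have h := Real.cos_two_mul (ζ/2)
      have h' : 2 * (ζ/2) = ζ := by ring
      rw [h'] at h
      nlinarith [Real.sin_sq_add_cos_sq (ζ/2)]
    have h2 : |Real.sin (ζ/2)| ≤ |ζ/2| := Real.abs_sin_le_abs
    have h3 : |Real.sin (ζ/2)| ≤ 1 := Real.abs_sin_le_one _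
    have h4 : Real.sin (ζ/2) ^ 2 ≤ |ζ/2| := by
      calc Real.sin (ζ/2) ^ 2 = |Real.sin (ζ/2)| * |Real.sin (ζ/2)| := by
            rw [← sq_abs]; ring
        _ ≤ 1 * |ζ/2| := mul_le_mul h3 h2 (abs_nonneg _) zero_le_one
        _ = |ζ/2| := one_mul _
    have h5 : |ζ/2| = |ζ|/2 := by rw [abs_div]; norm_num
    rw [h5] at h4
    linarith [h1]
  have hc : (1 - Real.cos ζ) ^ 2 ≤ ζ ^ 2 := by
    nlinarith [sq_abs ζ, abs_nonneg ζ]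
  have hwv : ((rodrigues a ζ)ᵀ - 1) *ᵥ ![0, 0, 1] =
      ![-(Real.sin ζ) * a 1 + (1 - Real.cos ζ) * (a 0 * a 2),
        Real.sin ζ * a 0 + (1 - Real.cos ζ) * (a 1 * a 2),
        (1 - Real.cos ζ) * (-(a 0^2) - a 1^2)] := by
    funext i
    simp only [Matrix.mulVec, dotProduct, Fin.sum_univ_three, Matrix.sub_apply,
      Matrix.transpose_apply, Matrix.one_apply, Matrix.cons_val_zero, Matrix.cons_val_one,
      Matrix.head_cons, Matrix.cons_val_two, Matrix.tail_cons]
    fin_cases i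
    all_goals simp [rodrigues, skewMat, Matrix.mul_apply, Fin.sum_univ_three, Matrix.one_apply,
      Matrix.add_apply, Matrix.smul_apply]
    all_goals refine Or.inl ?_
    all_goals ring
  have hv : T • (Rd * ((rodrigues a ζ)ᵀ - 1)) *ᵥ ![0, 0, 1]
      = fun i => T * (Rd i 0 * (-(Real.sin ζ) * a 1 + (1 - Real.cos ζ) * (a 0 * a 2))
          + Rd i 1 * (Real.sin ζ * a 0 + (1 - Real.cos ζ) * (a 1 * a 2))
          + Rd i 2 * ((1 - Real.cos ζ) * (-(a 0^2) - a 1^2))) := by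
    rw [← Matrix.mulVec_mulVec, hwv]
    funext i
    simp [Matrix.mulVec, dotProduct, Fin.sum_univ_three]
  rw [norm3, hv]
  rw [show Real.sqrt 6 * T * |ζ| = Real.sqrt (6 * T^2 * ζ^2) by
    rw [show (6:ℝ) * T^2 * ζ^2 = 6 * (T^2 * ζ^2) by ring, Real.sqrt_mul (by norm_num),
      Real.sqrt_mul (by positivity), Real.sqrt_sq hT, Real.sqrt_sq_eq_abs]; ring]
  apply Real.sqrt_le_sqrt
  rw [Fin.sum_univ_three]
  have horth := aux_orth Rd hRd T
    (-(Real.sin ζ) * a 1 + (1 - Real.cos ζ) * (a 0 * a 2))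
    (Real.sin ζ * a 0 + (1 - Real.cos ζ) * (a 1 * a 2))
    ((1 - Real.cos ζ) * (-(a 0^2) - a 1^2))
  have hbnd := aux_bound (Real.sin ζ) (1 - Real.cos ζ) (a 0) (a 1) (a 2) ζ hs hc hunit
  have hT2 : (0:ℝ) ≤ T^2 := sq_nonneg T
  calc (fun i => T * (Rd i 0 * (-(Real.sin ζ) * a 1 + (1 - Real.cos ζ) * (a 0 * a 2))
          + Rd i 1 * (Real.sin ζ * a 0 + (1 - Real.cos ζ) * (a 1 * a 2))
          + Rd i 2 * ((1 - Real.cos ζ) * (-(a 0^2) - a 1^2)))) 0 ^ 2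
        + (fun i => T * (Rd i 0 * (-(Real.sin ζ) * a 1 + (1 - Real.cos ζ) * (a 0 * a 2))
          + Rd i 1 * (Real.sin ζ * a 0 + (1 - Real.cos ζ) * (a 1 * a 2))
          + Rd i 2 * ((1 - Real.cos ζ) * (-(a 0^2) - a 1^2)))) 1 ^ 2
        + (fun i => T * (Rd i 0 * (-(Real.sin ζ) * a 1 + (1 - Real.cos ζ) * (a 0 * a 2))
          + Rd i 1 * (Real.sin ζ * a 0 + (1 - Real.cos ζ) * (a 1 * a 2))
          + Rd i 2 * ((1 - Real.cos ζ) * (-(a 0^2) - a 1^2)))) 2 ^ 2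
      = T^2 * ((-(Real.sin ζ) * a 1 + (1 - Real.cos ζ) * (a 0 * a 2))^2
          + (Real.sin ζ * a 0 + (1 - Real.cos ζ) * (a 1 * a 2))^2
          + ((1 - Real.cos ζ) * (-(a 0^2) - a 1^2))^2) := by
        simpa using horth
    _ ≤ T^2 * (6 * ζ^2) := by
        apply mul_le_mul_of_nonneg_left _ hT2
        simpa using hbnd
    _ = 6 * T^2 * ζ^2 := by ring
end

section
/- Let J be a 3×3 real symmetric positive definite matrix with largest eigenvalue λ_M, let K_d > 0, and let η be a real number with 0 < η < K_d / λ_M. Then the 6×6 block matrix M := [[4 η K_d I₃, 2 η J], [2 η J, J]] is symmetric positive definite. -/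
open Matrix

/-- Key bound: `lamM • J - J * J` is positive semidefinite when all
eigenvalues of the positive definite `J` are at most `lamM`. -/
lemma aux_smul_sub_sq_posSemidef (J : Matrix (Fin 3) (Fin 3) ℝ) (hJ : J.PosDef) (lamM : ℝ)
    (hub : ∀ i, hJ.1.eigenvalues i ≤ lamM) :
    (lamM • J - J * J).PosSemidef := by
  have hpos : ∀ i, 0 < hJ.1.eigenvalues i := hJ.eigenvalues_pos
  set ev := hJ.1.eigenvalues with hev
  set U : Matrix (Fin 3) (Fin 3) ℝ := (hJ.1.eigenvectorUnitary : Matrix (Fin 3) (Fin 3) ℝ)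
    with hUdef
  have hU' : star U * U = 1 := (Matrix.mem_unitaryGroup_iff').mp hJ.1.eigenvectorUnitary.2
  have hspec : J = U * Matrix.diagonal ev * star U := by
    have := hJ.1.spectral_theorem
    rw [Unitary.conjStarAlgAut_apply, ← hev, ← hUdef] at this
    simpa [Function.comp] using this
  have key : lamM • J - J * J
      = U * Matrix.diagonal (fun i => ev i * (lamM - ev i)) * star U := by
    rw [hspec]
    have hcancel : ∀ X : Matrix (Fin 3) (Fin 3) ℝ, star U * (U * X) = X := fun X => by
      rw [← Matrix.mul_assoc, hU', Matrix.one_mul]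
    have h2 : (U * Matrix.diagonal ev * star U) * (U * Matrix.diagonal ev * star U)
        = U * (Matrix.diagonal ev * Matrix.diagonal ev) * star U := by
      simp only [Matrix.mul_assoc, hcancel]
    rw [h2, Matrix.diagonal_mul_diagonal, ← Matrix.smul_mul, ← Matrix.mul_smul,
      ← Matrix.diagonal_smul, ← Matrix.sub_mul, ← Matrix.mul_sub, Matrix.diagonal_sub]
    congr 1
    congr 1
    funext i
    funext j
    rcases eq_or_ne i j with rfl | hij
    · simp only [Matrix.diagonal_apply_eq, Pi.smul_apply, smul_eq_mul]
      ring
    · simp [Matrix.diagonal_apply_ne _ hij]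
  rw [key]
  have hdiag : (Matrix.diagonal (fun i => ev i * (lamM - ev i))).PosSemidef := by
    refine Matrix.posSemidef_diagonal_iff.mpr fun i => ?_
    have h1 := hpos i
    have h2 := hub i
    nlinarith
  exact hdiag.mul_mul_conjTranspose_same U

/-- Positive definiteness (and symmetry) of the 6×6 block matrix
`M = [[4ηK_d I₃, 2ηJ], [2ηJ, J]]` from the Lyapunov function of Proposition 1. -/
theorem stmt2 (J : Matrix (Fin 3) (Fin 3) ℝ) (hJ : J.PosDef) (lamM : ℝ)
    (hmax : (∀ i, hJ.1.eigenvalues i ≤ lamM) ∧ ∃ i, hJ.1.eigenvalues i = lamM)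
    (Kd η : ℝ) (hKd : 0 < Kd) (hη0 : 0 < η) (hη : η < Kd / lamM) :
    (Matrix.fromBlocks ((4 * η * Kd) • (1 : Matrix (Fin 3) (Fin 3) ℝ)) ((2 * η) • J)
        ((2 * η) • J) J).IsSymm ∧
      (Matrix.fromBlocks ((4 * η * Kd) • (1 : Matrix (Fin 3) (Fin 3) ℝ)) ((2 * η) • J)
        ((2 * η) • J) J).PosDef := by
  have hJs : Jᵀ = J := by simpa [Matrix.conjTranspose_eq_transpose_of_trivial] using hJ.1.eq
  have hlamM : 0 < lamM := by
    obtain ⟨i, hi⟩ := hmax.2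
    have := hJ.eigenvalues_pos i
    linarith
  have hηlamM : η * lamM < Kd := (lt_div_iff₀ hlamM).mp hη
  have hsymm : (Matrix.fromBlocks ((4 * η * Kd) • (1 : Matrix (Fin 3) (Fin 3) ℝ)) ((2 * η) • J)
      ((2 * η) • J) J).IsSymm := by
    unfold Matrix.IsSymm
    rw [Matrix.fromBlocks_transpose]
    simp [Matrix.transpose_smul, hJs]
  -- symmetric dot-product helper
  have hJd : ∀ a b : Fin 3 → ℝ, (J *ᵥ a) ⬝ᵥ b = a ⬝ᵥ (J *ᵥ b) := by
    intro a b
    rw [Matrix.dotProduct_mulVec a J b]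
    congr 1
    rw [← Matrix.mulVec_transpose, hJs]
  refine ⟨hsymm, Matrix.posDef_iff_dotProduct_mulVec.mpr ⟨?_, ?_⟩⟩
  · -- Hermitian
    have h := hsymm
    unfold Matrix.IsSymm at h
    ext i j
    simpa [Matrix.conjTranspose_apply] using congrFun (congrFun h i) j
  · intro x hx
    set u : Fin 3 → ℝ := x ∘ Sum.inl with hu
    set v : Fin 3 → ℝ := x ∘ Sum.inr with hv
    have hxe : x = Sum.elim u v := by
      funext i; cases i <;> rfl
    have hQ : dotProduct (star x)
        ((Matrix.fromBlocks ((4 * η * Kd) • (1 : Matrix (Fin 3) (Fin 3) ℝ)) ((2 * η) • J)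
          ((2 * η) • J) J) *ᵥ x)
        = (4 * η * Kd) * (u ⬝ᵥ u) + (2 * η) * (u ⬝ᵥ (J *ᵥ v)) + (2 * η) * (v ⬝ᵥ (J *ᵥ u))
          + v ⬝ᵥ (J *ᵥ v) := by
      rw [hxe]
      simp [Matrix.fromBlocks_mulVec, sumElim_dotProduct_sumElim, Matrix.smul_mulVec,
        dotProduct_add, dotProduct_smul, smul_eq_mul, Matrix.one_mulVec]
      ring
    have hcomm : v ⬝ᵥ (J *ᵥ u) = u ⬝ᵥ (J *ᵥ v) := by
      rw [← hJd v u, dotProduct_comm]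
    have hkey := (aux_smul_sub_sq_posSemidef J hJ lamM hmax.1).dotProduct_mulVec_nonneg v
    have hd : v ⬝ᵥ ((J * J) *ᵥ v) ≤ lamM * (v ⬝ᵥ (J *ᵥ v)) := by
      have h0 : (0:ℝ) ≤ v ⬝ᵥ ((lamM • J - J * J) *ᵥ v) := by simpa using hkey
      rw [Matrix.sub_mulVec] at h0
      simp only [dotProduct_sub, Matrix.smul_mulVec, dotProduct_smul,
        smul_eq_mul] at h0
      linarith
    have hd' : (J *ᵥ v) ⬝ᵥ (J *ᵥ v) = v ⬝ᵥ ((J * J) *ᵥ v) := by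
      rw [hJd v (J *ᵥ v), Matrix.mulVec_mulVec]
    set w : Fin 3 → ℝ := (2 * Kd) • u + J *ᵥ v with hw
    have hwexp : w ⬝ᵥ w = (4 * Kd^2) * (u ⬝ᵥ u) + (4 * Kd) * (u ⬝ᵥ (J *ᵥ v))
        + (J *ᵥ v) ⬝ᵥ (J *ᵥ v) := by
      rw [hw]
      simp only [add_dotProduct, dotProduct_add, smul_dotProduct,
        dotProduct_smul, smul_eq_mul]
      rw [dotProduct_comm (J *ᵥ v) u]
      ring
    rw [hd'] at hwexp
    have hwnn : 0 ≤ w ⬝ᵥ w := Finset.sum_nonneg fun i _ => mul_self_nonneg _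
    have hWW : 0 ≤ (4 * Kd^2) * (u ⬝ᵥ u) + (4 * Kd) * (u ⬝ᵥ (J *ᵥ v))
        + v ⬝ᵥ ((J * J) *ᵥ v) := by rw [← hwexp]; exact hwnn
    rw [hQ, hcomm]
    by_cases hv0 : v = 0
    · have hu0 : u ≠ 0 := by
        intro h
        apply hx
        rw [hxe, h, hv0]
        funext i; cases i <;> rfl
      have hupos : 0 < u ⬝ᵥ u := by
        have h2 : ∃ i, u i ≠ 0 := by
          by_contra h
          push_neg at h
          exact hu0 (funext h)
        obtain ⟨i, hi⟩ := h2
        exact Finset.sum_pos' (fun j _ => mul_self_nonneg _)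
          ⟨i, Finset.mem_univ i, mul_self_pos.mpr hi⟩
      have := mul_pos (mul_pos hη0 hKd) hupos
      simp only [hv0, Matrix.mulVec_zero, dotProduct_zero, zero_dotProduct]
      nlinarith
    · have hbpos : 0 < v ⬝ᵥ (J *ᵥ v) := by simpa using hJ.dotProduct_mulVec_pos hv0
      nlinarith [mul_nonneg hη0.le hWW, mul_le_mul_of_nonneg_left hd hη0.le,
        mul_pos hbpos (sub_pos.mpr hηlamM), hKd, hη0]
end

section
/- Let J be a 3×3 real symmetric positive definite matrix with largest eigenvalue λ_M, let K_p, K_d > 0, and let η satisfy 0 < η < K_d / λ_M. For a unit quaternion q = (q₀, q_v) with q₀ ∈ ℝ, q_v ∈ ℝ³, q₀² + ‖q_v‖² = 1, and for ω ∈ ℝ³, define V(q₀, q_v, ω) := 2 K_p (1 − q₀) + ½ (4 η K_d ‖q_v‖² + 4 η ⟨q_v, J ω⟩ + ⟨ω, J ω⟩). Then V(q₀, q_v, ω) ≥ 0, and V(q₀, q_v, ω) = 0 if and only if q₀ = 1 and ω = 0 (in which case necessarily q_v = 0). -/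
open Matrix

/-- Euclidean inner product on `ℝ³` (as `Fin 3 → ℝ`). -/
def inner3 (v w : Fin 3 → ℝ) : ℝ := ∑ i, v i * w i

/-- The Lyapunov function candidate
`V(q₀, q_v, ω) = 2K_p(1 - q₀) + ½(4ηK_d‖q_v‖² + 4η⟨q_v, Jω⟩ + ⟨ω, Jω⟩)`. -/
noncomputable def lyapV (J : Matrix (Fin 3) (Fin 3) ℝ) (Kp Kd η q₀ : ℝ)
    (qv ω : Fin 3 → ℝ) : ℝ :=
  2 * Kp * (1 - q₀) +
    (1 / 2) * (4 * η * Kd * inner3 qv qv + 4 * η * inner3 qv (J *ᵥ ω) + inner3 ω (J *ᵥ ω))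

lemma inner3_eq_dot (v w : Fin 3 → ℝ) : inner3 v w = dotProduct v w := rfl

/-- Positive definiteness of the Lyapunov function candidate of Proposition 1:
`V ≥ 0`, with `V = 0` iff `q₀ = 1` and `ω = 0`. -/
theorem stmt3 (J : Matrix (Fin 3) (Fin 3) ℝ) (hJ : J.PosDef) (lamM : ℝ)
    (hmax : (∀ i, hJ.1.eigenvalues i ≤ lamM) ∧ ∃ i, hJ.1.eigenvalues i = lamM)
    (Kp Kd η : ℝ) (hKp : 0 < Kp) (hKd : 0 < Kd) (hη0 : 0 < η) (hη : η < Kd / lamM)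
    (q₀ : ℝ) (qv ω : Fin 3 → ℝ) (hunit : q₀ ^ 2 + inner3 qv qv = 1) :
    0 ≤ lyapV J Kp Kd η q₀ qv ω ∧
      (lyapV J Kp Kd η q₀ qv ω = 0 ↔ q₀ = 1 ∧ ω = 0) := by
  -- basic facts
  have hpsd : ∀ x : Fin 3 → ℝ, 0 ≤ inner3 x (J *ᵥ x) := by
    intro x
    simpa [inner3_eq_dot] using hJ.posSemidef.dotProduct_mulVec_nonneg x
  have hpd : ∀ x : Fin 3 → ℝ, x ≠ 0 → 0 < inner3 x (J *ᵥ x) := by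
    intro x hx
    simpa [inner3_eq_dot] using hJ.dotProduct_mulVec_pos hx
  -- lamM is positive
  obtain ⟨i₀, hi₀⟩ := hmax.2
  have hlamM : 0 < lamM := hi₀ ▸ hJ.eigenvalues_pos i₀
  -- `lamM • 1 - J` is positive semidefinite
  have hbound : ∀ x : Fin 3 → ℝ, inner3 x (J *ᵥ x) ≤ lamM * inner3 x x := by
    have hsub : (lamM • (1 : Matrix (Fin 3) (Fin 3) ℝ) - J).PosSemidef := by
      have hdiag : (diagonal (fun i => lamM - hJ.1.eigenvalues i)).PosSemidef :=
        posSemidef_diagonal_iff.mpr fun i => sub_nonneg.mpr (hmax.1 i)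
      have h := hdiag.mul_mul_conjTranspose_same
        (hJ.1.eigenvectorUnitary : Matrix (Fin 3) (Fin 3) ℝ)
      have hU : (hJ.1.eigenvectorUnitary : Matrix (Fin 3) (Fin 3) ℝ) *
          star (hJ.1.eigenvectorUnitary : Matrix (Fin 3) (Fin 3) ℝ) = 1 :=
        Matrix.mem_unitaryGroup_iff.mp hJ.1.eigenvectorUnitary.2
      have hspec := hJ.1.spectral_theorem
      have heq : (hJ.1.eigenvectorUnitary : Matrix (Fin 3) (Fin 3) ℝ) *
          diagonal (fun i => lamM - hJ.1.eigenvalues i) *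
          (hJ.1.eigenvectorUnitary : Matrix (Fin 3) (Fin 3) ℝ)ᴴ
          = lamM • (1 : Matrix (Fin 3) (Fin 3) ℝ) - J := by
        have hd : diagonal (fun i => lamM - hJ.1.eigenvalues i)
            = lamM • (1 : Matrix (Fin 3) (Fin 3) ℝ)
              - diagonal (RCLike.ofReal ∘ hJ.1.eigenvalues) := by
          ext i j
          by_cases h : i = j <;> simp [h, Matrix.one_apply]
        rw [Unitary.conjStarAlgAut_apply, Matrix.star_eq_conjTranspose] at hspec
        rw [hd, Matrix.mul_sub, Matrix.sub_mul, ← hspec]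
        congr 1
        rw [Matrix.mul_smul, Matrix.mul_one, Matrix.smul_mul]
        have : (hJ.1.eigenvectorUnitary : Matrix (Fin 3) (Fin 3) ℝ) *
            (hJ.1.eigenvectorUnitary : Matrix (Fin 3) (Fin 3) ℝ)ᴴ = 1 := hU
        rw [this]
      rwa [heq] at h
    intro x
    have := hsub.dotProduct_mulVec_nonneg x
    simp only [star_trivial, sub_mulVec, smul_mulVec, one_mulVec,
      dotProduct_sub, dotProduct_smul] at this
    rw [inner3_eq_dot, inner3_eq_dot]
    have h2 : (0:ℝ) ≤ lamM * dotProduct x x - dotProduct x (J *ᵥ x) := by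
      simpa [smul_eq_mul] using this
    linarith
  -- symmetry of J
  have hsym : ∀ a b : Fin 3 → ℝ, inner3 a (J *ᵥ b) = inner3 b (J *ᵥ a) := by
    intro a b
    rw [inner3_eq_dot, inner3_eq_dot, dotProduct_mulVec, ← mulVec_transpose]
    have hT : Jᵀ = J := by
      have := hJ.1
      rwa [IsHermitian, conjTranspose_eq_transpose_of_trivial] at this
    rw [hT, dotProduct_comm]
  -- decomposition with u = ω + (2η) • qv
  set u : Fin 3 → ℝ := ω + (2 * η) • qv with hu
  have hqq : (0:ℝ) ≤ inner3 qv qv := by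
    apply Finset.sum_nonneg; intro i _; exact mul_self_nonneg _
  have key : lyapV J Kp Kd η q₀ qv ω
      = 2 * Kp * (1 - q₀) + (1 / 2) * inner3 u (J *ᵥ u)
        + (2 * η * Kd * inner3 qv qv - 2 * η ^ 2 * inner3 qv (J *ᵥ qv)) := by
    have hexp : inner3 u (J *ᵥ u)
        = inner3 ω (J *ᵥ ω) + 4 * η * inner3 qv (J *ᵥ ω)
          + 4 * η ^ 2 * inner3 qv (J *ᵥ qv) := by
      simp only [hu, inner3_eq_dot, mulVec_add, mulVec_smul, dotProduct_add,
        add_dotProduct, smul_dotProduct, dotProduct_smul, smul_eq_mul]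
      have := hsym qv ω
      rw [inner3_eq_dot, inner3_eq_dot] at this
      rw [this]; ring
    rw [lyapV, hexp]; ring
  -- the cross-quadratic residual term is nonnegative
  have hres : 0 ≤ 2 * η * Kd * inner3 qv qv - 2 * η ^ 2 * inner3 qv (J *ᵥ qv) := by
    have h1 : inner3 qv (J *ᵥ qv) ≤ lamM * inner3 qv qv := hbound qv
    have h2 : η * lamM < Kd := by
      rw [lt_div_iff₀ hlamM] at hη; linarith
    nlinarith [mul_nonneg (mul_nonneg hη0.le hqq) (sub_pos.mpr h2).le,
      mul_nonneg (sq_nonneg η) (sub_nonneg.mpr h1)]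
  -- the first term is nonnegative
  have hq0le : q₀ ≤ 1 := by nlinarith [hqq]
  have ht1 : 0 ≤ 2 * Kp * (1 - q₀) := by nlinarith
  have ht2 : 0 ≤ (1 / 2) * inner3 u (J *ᵥ u) := by linarith [hpsd u]
  constructor
  · rw [key]; linarith
  · constructor
    · intro h0
      rw [key] at h0
      have hq1 : q₀ = 1 := by nlinarith
      have hqv0 : inner3 qv qv = 0 := by rw [hq1] at hunit; linarith
      have hqv : qv = 0 := by
        rw [inner3_eq_dot] at hqv0
        exact dotProduct_self_eq_zero.mp hqv0
      have huω : u = ω := by rw [hu, hqv]; simp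
      have hqres : 2 * η * Kd * inner3 qv qv - 2 * η ^ 2 * inner3 qv (J *ᵥ qv) = 0 := by
        rw [hqv]; simp [inner3]
      have hJu : inner3 u (J *ᵥ u) = 0 := by
        rw [hq1] at h0; nlinarith [hpsd u]
      refine ⟨hq1, ?_⟩
      by_contra hω
      have := hpd ω hω
      rw [huω] at hJu
      linarith
    · rintro ⟨hq1, hω⟩
      have hqv0 : inner3 qv qv = 0 := by rw [hq1] at hunit; linarith
      have hqv : qv = 0 := by
        rw [inner3_eq_dot] at hqv0
        exact dotProduct_self_eq_zero.mp hqv0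
      rw [lyapV, hq1, hqv, hω]
      simp [inner3]
end

section
/- Let Q be a 2×2 real symmetric matrix all of whose entries are strictly positive, and let b ∈ ℝ² be such that y := Q⁻¹ b has both components nonnegative. If x ∈ ℝ² has both components strictly greater than the corresponding components of y, then ⟨x, Q x⟩ > ⟨x, b⟩, i.e., −xᵀ Q x + xᵀ b < 0. -/
open Matrix

/-- The algebraic core of the ISS implication in the proof of Proposition 1: if `x`
exceeds componentwise the (nonnegative) vector `y = Q⁻¹ b`, then `⟨x, Qx⟩ > ⟨x, b⟩`. -/
theorem stmt5 (Q : Matrix (Fin 2) (Fin 2) ℝ) (hsymm : Q.IsSymm)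
    (hpos : ∀ i j, 0 < Q i j) (hdet : IsUnit Q.det) (b x : Fin 2 → ℝ)
    (hy : ∀ i, 0 ≤ (Q⁻¹ *ᵥ b) i) (hx : ∀ i, (Q⁻¹ *ᵥ b) i < x i) :
    x ⬝ᵥ b < x ⬝ᵥ (Q *ᵥ x) := by
  set y := Q⁻¹ *ᵥ b with hy'
  have hb : b = Q *ᵥ y := by
    rw [hy', mulVec_mulVec, mul_nonsing_inv Q hdet, one_mulVec]
  conv_lhs => rw [hb]
  clear_value y
  have h00 := hpos 0 0
  have h01 := hpos 0 1
  have h10 := hpos 1 0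
  have h11 := hpos 1 1
  have hy0 := hy 0
  have hy1 := hy 1
  have hx0 := hx 0
  have hx1 := hx 1
  simp only [dotProduct, mulVec, Fin.sum_univ_two, dotProduct] at *
  have px0 : 0 < x 0 := lt_of_le_of_lt hy0 hx0
  have px1 : 0 < x 1 := lt_of_le_of_lt hy1 hx1
  nlinarith [mul_pos (mul_pos h00 px0) (sub_pos.2 hx0),
    mul_pos (mul_pos h01 px0) (sub_pos.2 hx1),
    mul_pos (mul_pos h10 px1) (sub_pos.2 hx0),
    mul_pos (mul_pos h11 px1) (sub_pos.2 hx1)]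
end

section
/- Let L > 0, let p_d ∈ ℝ³ with ‖p_d‖ = L, and let p : ℝ → ℝ³ be a curve with ‖p(t)‖ = L for all t, differentiable at t₀ with derivative v := p'(t₀), and such that p(t₀) × p_d ≠ 0. Then the function t ↦ L · arccos(⟨p(t), p_d⟩ / L²) is differentiable at t₀ with derivative −⟨v, t̂⟩, where t̂ := ((p(t₀) × p_d) × p(t₀)) / ‖(p(t₀) × p_d) × p(t₀)‖. -/
open Matrix

set_option maxHeartbeats 1000000 in
/-- Derivative of the great-circle distance along a curve on the sphere of radius `L`:
`d/dt (L arccos(⟨p(t), p_d⟩/L²)) = -⟨ṗ, t̂⟩` with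
`t̂ = ((p × p_d) × p)/‖(p × p_d) × p‖`. -/
theorem stmt9 (L : ℝ) (hL : 0 < L) (pd : Fin 3 → ℝ) (hpd : norm3 pd = L)
    (p : ℝ → Fin 3 → ℝ) (hp : ∀ t, norm3 (p t) = L) (t₀ : ℝ) (v : Fin 3 → ℝ)
    (hv : HasDerivAt p v t₀) (hc : crossProduct (p t₀) pd ≠ 0) :
    HasDerivAt (fun t => L * Real.arccos (inner3 (p t) pd / L ^ 2))
      (-inner3 v ((norm3 (crossProduct (crossProduct (p t₀) pd) (p t₀)))⁻¹ •
        crossProduct (crossProduct (p t₀) pd) (p t₀))) t₀ := by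
  set a : Fin 3 → ℝ := p t₀ with ha
  set c : ℝ := inner3 a pd with hcdef
  -- component derivatives
  have hvi : ∀ i, HasDerivAt (fun t => p t i) (v i) t₀ := fun i => hasDerivAt_pi.mp hv i
  -- derivative of inner product
  have hinner : HasDerivAt (fun t => inner3 (p t) pd) (inner3 v pd) t₀ := by
    simp only [inner3]
    exact HasDerivAt.fun_sum fun i _ => (hvi i).mul_const _
  -- sum of squares of p t equals L^2
  have hS : ∀ t, ∑ i, p t i ^ 2 = L ^ 2 := by
    intro t
    have h := hp t
    rw [norm3] at h
    nlinarith [Real.sq_sqrt (by positivity : (0:ℝ) ≤ ∑ i, p t i ^ 2)]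
  have hT : ∑ i, pd i ^ 2 = L ^ 2 := by
    rw [norm3] at hpd
    nlinarith [Real.sq_sqrt (by positivity : (0:ℝ) ≤ ∑ i, pd i ^ 2)]
  -- v ⟂ p t₀
  have hvp : inner3 v a = 0 := by
    have hSd : HasDerivAt (fun t => ∑ i, p t i ^ 2) (∑ i, (v i * p t₀ i + p t₀ i * v i)) t₀ := by
      refine HasDerivAt.fun_sum fun i _ => ?_
      simpa [pow_two] using (hvi i).fun_mul (hvi i)
    rw [show (fun t => ∑ i, p t i ^ 2) = fun _ => L ^ 2 from funext hS] at hSd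
    have h0 := (hasDerivAt_const t₀ (L ^ 2)).unique hSd
    simp only [inner3, ← ha] at *
    rw [Fin.sum_univ_three] at h0 ⊢
    linarith
  -- positivity of cross product norm squared
  have hcross_pos : 0 < ∑ i, (crossProduct a pd : Fin 3 → ℝ) i ^ 2 := by
    rcases (lt_or_eq_of_le (by positivity : (0:ℝ) ≤ ∑ i, (crossProduct a pd : Fin 3 → ℝ) i ^ 2)) with h | h
    · exact h
    · exfalso; apply hc
      have h' := h.symm
      rw [Fin.sum_univ_three] at h'
      have e0 : (crossProduct a pd : Fin 3 → ℝ) 0 = 0 := by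
        nlinarith [sq_nonneg ((crossProduct a pd : Fin 3 → ℝ) 1),
          sq_nonneg ((crossProduct a pd : Fin 3 → ℝ) 2)]
      have e1 : (crossProduct a pd : Fin 3 → ℝ) 1 = 0 := by
        nlinarith [sq_nonneg ((crossProduct a pd : Fin 3 → ℝ) 0),
          sq_nonneg ((crossProduct a pd : Fin 3 → ℝ) 2)]
      have e2 : (crossProduct a pd : Fin 3 → ℝ) 2 = 0 := by
        nlinarith [sq_nonneg ((crossProduct a pd : Fin 3 → ℝ) 0),
          sq_nonneg ((crossProduct a pd : Fin 3 → ℝ) 1)]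
      funext i
      fin_cases i
      · exact e0
      · exact e1
      · exact e2
  -- Lagrange identity
  have hlag : ∑ i, (crossProduct a pd : Fin 3 → ℝ) i ^ 2 = L ^ 2 * L ^ 2 - c ^ 2 := by
    have h1 := hS t₀
    rw [← ha] at h1
    simp only [hcdef, inner3, cross_apply, Fin.sum_univ_three] at *
    simp only [Matrix.cons_val_zero, Matrix.cons_val_one, Matrix.head_cons,
      Matrix.cons_val_two, Matrix.tail_cons] at *
    nlinarith [h1, hT]
  have hL4 : 0 < L ^ 2 * L ^ 2 - c ^ 2 := hlag ▸ hcross_pos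
  set w : Fin 3 → ℝ := crossProduct (crossProduct a pd) a with hw
  -- norm of w
  have hwsq : ∑ i, w i ^ 2 = L ^ 2 * (L ^ 2 * L ^ 2 - c ^ 2) := by
    have h1 := hS t₀
    rw [← ha] at h1
    rw [← hlag]
    simp only [hw, hcdef, inner3, cross_apply, Fin.sum_univ_three]
    simp only [Matrix.cons_val_zero, Matrix.cons_val_one, Matrix.head_cons,
      Matrix.cons_val_two, Matrix.tail_cons]
    rw [Fin.sum_univ_three] at h1
    nlinarith [h1]
  set s : ℝ := Real.sqrt (L ^ 2 * L ^ 2 - c ^ 2) with hs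
  have hspos : 0 < s := Real.sqrt_pos.mpr hL4
  have hnw : norm3 w = L * s := by
    rw [norm3, hwsq, Real.sqrt_mul (by positivity), Real.sqrt_sq hL.le]
  -- inner3 v w = L^2 * inner3 v pd
  have hvw : inner3 v w = L ^ 2 * inner3 v pd := by
    have h1 := hS t₀
    rw [← ha, Fin.sum_univ_three] at h1
    have hvp' := hvp
    simp only [inner3, Fin.sum_univ_three] at hvp'
    simp only [hw, inner3, cross_apply, Fin.sum_univ_three]
    simp only [Matrix.cons_val_zero, Matrix.cons_val_one, Matrix.head_cons,
      Matrix.cons_val_two, Matrix.tail_cons]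
    linear_combination (v 0 * pd 0 + v 1 * pd 1 + v 2 * pd 2) * h1 -
      (a 0 * pd 0 + a 1 * pd 1 + a 2 * pd 2) * hvp'
  -- the arccos argument is in the open interval
  have hx1 : c / L ^ 2 ≠ 1 := by
    intro h
    have : c = L ^ 2 := by field_simp at h; linarith
    nlinarith
  have hxm1 : c / L ^ 2 ≠ -1 := by
    intro h
    have : c = -(L ^ 2) := by field_simp at h; linarith
    nlinarith
  -- sqrt computation
  have hsqrt : Real.sqrt (1 - (c / L ^ 2) ^ 2) = s / L ^ 2 := by
    have h : 1 - (c / L ^ 2) ^ 2 = (L ^ 2 * L ^ 2 - c ^ 2) / (L ^ 2) ^ 2 := by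
      field_simp
    rw [h, hs, Real.sqrt_div hL4.le, Real.sqrt_sq (by positivity)]
  -- assemble
  have hg : HasDerivAt (fun t => inner3 (p t) pd / L ^ 2) (inner3 v pd / L ^ 2) t₀ :=
    hinner.div_const _
  have harc := (Real.hasDerivAt_arccos hxm1 hx1).comp t₀ (by simpa [← hcdef] using hg)
  have := harc.const_mul L
  convert this using 1
  · rfl
  · rfl
  · rfl
  have hiv : inner3 v ((norm3 w)⁻¹ • w) = (norm3 w)⁻¹ * inner3 v w := by
    simp only [inner3, Pi.smul_apply, smul_eq_mul, Finset.mul_sum]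
    exact Finset.sum_congr rfl fun i _ => by ring
  rw [hiv, hvw, hnw, hsqrt]
  field_simp
end

section
/- Let L > 0, let p_d ∈ ℝ³ with ‖p_d‖ = L, and let p : ℝ → ℝ³ be a curve with ‖p(t)‖ = L for all t, differentiable at t₀ with derivative v := p'(t₀), and such that p(t₀) × p_d ≠ 0. Define Δ(t) := arccos(⟨p(t), p_d⟩ / L²) and t̂(t) := (p_d − (⟨p(t), p_d⟩ / L²) p(t)) / (L · sin Δ(t)). Then t ↦ t̂(t) is differentiable at t₀ with derivative t̂'(t₀) = −(⟨v, p_d⟩ / L²) · p(t₀) / (L · sin Δ(t₀)) − (cos Δ(t₀) / (L · sin Δ(t₀))) · (v − ⟨v, t̂(t₀)⟩ t̂(t₀)). -/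
open Matrix

/-- The angle `Δ = arccos(⟨p, p_d⟩/L²)` between `p` and `p_d`. -/
noncomputable def angleTo (L : ℝ) (pd p : Fin 3 → ℝ) : ℝ :=
  Real.arccos (inner3 p pd / L ^ 2)

/-- The geodesic unit tangent vector `t̂ = (p_d - (⟨p,p_d⟩/L²) p)/(L sin Δ)`. -/
noncomputable def geoTangent (L : ℝ) (pd p : Fin 3 → ℝ) : Fin 3 → ℝ :=
  (L * Real.sin (angleTo L pd p))⁻¹ • (pd - (inner3 p pd / L ^ 2) • p)

/-- Derivative of the geodesic unit tangent vector `t̂` along a curve on the sphere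
of radius `L` (eq. ddttexplicit in the paper):
`t̂' = -(⟨v, p_d⟩/L²) p/(L sin Δ) - (cos Δ/(L sin Δ))(v - ⟨v, t̂⟩ t̂)`. -/
theorem stmt10 (L : ℝ) (hL : 0 < L) (pd : Fin 3 → ℝ) (hpd : norm3 pd = L)
    (p : ℝ → Fin 3 → ℝ) (hp : ∀ t, norm3 (p t) = L) (t₀ : ℝ) (v : Fin 3 → ℝ)
    (hv : HasDerivAt p v t₀) (hc : crossProduct (p t₀) pd ≠ 0) :
    HasDerivAt (fun t => geoTangent L pd (p t))
      (-((inner3 v pd / L ^ 2) * (L * Real.sin (angleTo L pd (p t₀)))⁻¹) • p t₀ -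
        (Real.cos (angleTo L pd (p t₀)) / (L * Real.sin (angleTo L pd (p t₀)))) •
          (v - inner3 v (geoTangent L pd (p t₀)) • geoTangent L pd (p t₀))) t₀ := by
  have hL0 : L ≠ 0 := ne_of_gt hL
  -- squared norms
  have hppd : ∑ i, pd i ^ 2 = L ^ 2 := by
    have h0 : (0:ℝ) ≤ ∑ i, pd i ^ 2 := Finset.sum_nonneg fun i _ => sq_nonneg _
    have := Real.sq_sqrt h0
    rw [norm3] at hpd; rw [hpd] at this; linarith
  have hpp : ∀ t, ∑ i, p t i ^ 2 = L ^ 2 := by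
    intro t
    have h0 : (0:ℝ) ≤ ∑ i, p t i ^ 2 := Finset.sum_nonneg fun i _ => sq_nonneg _
    have := Real.sq_sqrt h0
    have hpt := hp t
    rw [norm3] at hpt; rw [hpt] at this; linarith
  -- componentwise derivative
  have hvi : ∀ i, HasDerivAt (fun t => p t i) (v i) t₀ := hasDerivAt_pi.mp hv
  -- ⟨v, p t₀⟩ = 0
  have hvp : inner3 v (p t₀) = 0 := by
    have hsq : HasDerivAt (fun t => ∑ i, p t i ^ 2)
        (∑ i : Fin 3, 2 * p t₀ i ^ 1 * v i) t₀ :=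
      HasDerivAt.fun_sum fun i _ => (hvi i).pow 2
    have hconst : HasDerivAt (fun _ : ℝ => L ^ 2) 0 t₀ := hasDerivAt_const _ _
    have he : (fun t => ∑ i, p t i ^ 2) = fun _ : ℝ => L ^ 2 := funext fun t => hpp t
    rw [he] at hsq
    have := hsq.unique hconst
    simp only [inner3, Fin.sum_univ_three, pow_one] at this ⊢
    linarith
  set c₀ : ℝ := inner3 (p t₀) pd with hc₀
  set cv : ℝ := inner3 v pd with hcv
  set u₀ : ℝ := c₀ / L ^ 2 with hu₀
  -- Lagrange identity: cross product nonzero ⇒ strict Cauchy-Schwarz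
  have hu1 : u₀ ^ 2 < 1 := by
    obtain ⟨i, hi⟩ := Function.ne_iff.mp hc
    have hlag : ∑ j, (crossProduct (p t₀) pd) j ^ 2 = L ^ 2 * L ^ 2 - c₀ ^ 2 := by
      have h1 := hpp t₀
      have h2 := hppd
      simp only [hc₀, inner3, cross_apply, Fin.sum_univ_three] at *
      simp only [Matrix.cons_val_zero, Matrix.cons_val_one, Matrix.head_cons,
        Matrix.cons_val_two, Matrix.tail_cons]
      nlinarith [h1, h2]
    have hpos : 0 < ∑ j, (crossProduct (p t₀) pd) j ^ 2 := by
      apply Finset.sum_pos' (fun j _ => sq_nonneg _)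
      exact ⟨i, Finset.mem_univ i, lt_of_le_of_ne (sq_nonneg _) (Ne.symm (pow_ne_zero 2 hi))⟩
    have : c₀ ^ 2 < L ^ 2 * L ^ 2 := by linarith
    rw [hu₀, div_pow]
    rw [div_lt_one (by positivity)]
    calc c₀ ^ 2 < L ^ 2 * L ^ 2 := this
    _ = (L ^ 2) ^ 2 := by ring
  have hu1' : |u₀| < 1 := by
    have := sq_lt_one_iff_abs_lt_one (a := u₀)
    exact this.mp hu1
  have hul : -1 ≤ u₀ := by cases abs_lt.mp hu1' with | intro a b => linarith
  have hur : u₀ ≤ 1 := by cases abs_lt.mp hu1' with | intro a b => linarith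
  set s₀ : ℝ := Real.sqrt (1 - u₀ ^ 2) with hs₀
  have hs0pos : 0 < s₀ := Real.sqrt_pos.mpr (by linarith)
  have hs0ne : s₀ ≠ 0 := ne_of_gt hs0pos
  have hs0sq : s₀ ^ 2 = 1 - u₀ ^ 2 := Real.sq_sqrt (by linarith)
  have hsin : Real.sin (angleTo L pd (p t₀)) = s₀ := by
    rw [angleTo, Real.sin_arccos]
  have hcos : Real.cos (angleTo L pd (p t₀)) = u₀ := by
    rw [angleTo, Real.cos_arccos hul hur]
  have hLs : L * s₀ ≠ 0 := mul_ne_zero hL0 hs0ne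
  -- derivative of inner product
  have hcder : HasDerivAt (fun t => inner3 (p t) pd) cv t₀ := by
    have : HasDerivAt (fun t => ∑ i : Fin 3, p t i * pd i) (∑ i : Fin 3, v i * pd i) t₀ :=
      HasDerivAt.fun_sum fun i _ => (hvi i).mul_const (pd i)
    simpa [inner3, hcv] using this
  set u' : ℝ := cv / L ^ 2 with hu'
  have huder : HasDerivAt (fun t => inner3 (p t) pd / L ^ 2) u' t₀ := hcder.div_const _
  -- derivative of sqrt(1 - u²)
  have hqder : HasDerivAt (fun t => 1 - (inner3 (p t) pd / L ^ 2) ^ 2)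
      (-(2 * u₀ ^ 1 * u')) t₀ := ((huder.pow 2).const_sub 1)
  have hsder : HasDerivAt (fun t => Real.sqrt (1 - (inner3 (p t) pd / L ^ 2) ^ 2))
      (-(2 * u₀ ^ 1 * u') / (2 * s₀)) t₀ := by
    have := hqder.sqrt (by rw [← hu₀]; intro h; rw [h] at hs0sq; nlinarith)
    rwa [← hu₀, ← hs₀] at this
  -- derivative of (L s)⁻¹
  have hinv : HasDerivAt (fun t => (L * Real.sqrt (1 - (inner3 (p t) pd / L ^ 2) ^ 2))⁻¹)
      (-(L * (-(2 * u₀ ^ 1 * u') / (2 * s₀))) / (L * s₀) ^ 2) t₀ := by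
    have := (hsder.const_mul L).inv (by rw [← hu₀, ← hs₀]; exact hLs)
    rwa [← hu₀, ← hs₀] at this
  -- derivative of pd - u • p
  have hgder : HasDerivAt (fun t => pd - (inner3 (p t) pd / L ^ 2) • p t)
      (-(u₀ • v + u' • p t₀)) t₀ := (huder.smul hv).const_sub pd
  have hmain := hinv.smul hgder
  rw [← hu₀, ← hs₀] at hmain
  -- rewrite the function to the sqrt form
  have hfun : (fun t => geoTangent L pd (p t)) =
      fun t => (L * Real.sqrt (1 - (inner3 (p t) pd / L ^ 2) ^ 2))⁻¹ •
        (pd - (inner3 (p t) pd / L ^ 2) • p t) := by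
    funext t
    rw [geoTangent, angleTo, Real.sin_arccos]
  rw [hfun]
  convert hmain using 1
  case e'_4 => rfl
  case e'_5 => rfl
  case e'_6 => rfl
  case e'_8 => rfl
  -- now prove the vector identity
  have hgt : geoTangent L pd (p t₀) = (L * s₀)⁻¹ • (pd - u₀ • p t₀) := by
    rw [geoTangent, hsin, ← hu₀]
  have hvt : inner3 v (geoTangent L pd (p t₀)) = (L * s₀)⁻¹ * cv := by
    rw [hgt, hcv]
    simp only [inner3, Fin.sum_univ_three, Pi.smul_apply, Pi.sub_apply, smul_eq_mul] at hvp ⊢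
    linear_combination (-((L * s₀)⁻¹ * u₀)) * hvp
  rw [hsin, hcos, hvt, hgt]
  funext i
  simp only [Pi.smul_apply, Pi.sub_apply, Pi.add_apply, Pi.neg_apply, smul_eq_mul,
    neg_mul, pow_one, hu', hu₀]
  field_simp
  ring
end

section
/- Let L > 0, let p_d ∈ ℝ³ with ‖p_d‖ = L, and let p : ℝ → ℝ³ be a curve with ‖p(t)‖ = L for all t, differentiable at t₀ with derivative v := p'(t₀), and such that p(t₀) × p_d ≠ 0. Define Δ := arccos(⟨p(t₀), p_d⟩ / L²), t̂ := (p_d − (⟨p(t₀), p_d⟩ / L²) p(t₀)) / (L sin Δ), and let w := −(⟨v, p_d⟩ / L²) · p(t₀) / (L sin Δ) − (cos Δ / (L sin Δ)) · (v − ⟨v, t̂⟩ t̂) be the derivative of t̂ at t₀. Then L Δ · ⟨v, w⟩ = −(Δ cos Δ / sin Δ) · (‖v‖² − ⟨v, t̂⟩²). -/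
open Matrix

/-- The derivative of `t̂` along the curve:
`w = -(⟨v, p_d⟩/L²) p/(L sin Δ) - (cos Δ/(L sin Δ))(v - ⟨v, t̂⟩ t̂)`. -/
noncomputable def geoTangentDeriv (L : ℝ) (pd p v : Fin 3 → ℝ) : Fin 3 → ℝ :=
  -((inner3 v pd / L ^ 2) * (L * Real.sin (angleTo L pd p))⁻¹) • p -
    (Real.cos (angleTo L pd p) / (L * Real.sin (angleTo L pd p))) •
      (v - inner3 v (geoTangent L pd p) • geoTangent L pd p)

lemma inner3_smul_right (v x : Fin 3 → ℝ) (a : ℝ) :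
    inner3 v (a • x) = a * inner3 v x := by
  simp [inner3, Finset.mul_sum, mul_comm, mul_left_comm]

lemma inner3_sub_right (v x y : Fin 3 → ℝ) :
    inner3 v (x - y) = inner3 v x - inner3 v y := by
  simp [inner3, mul_sub, Finset.sum_sub_distrib]

/-- Closed form of the term `B₂ = dist(p, p_d) ⟨v, dt̂/dt⟩` in the proof of
Proposition 2: `L Δ ⟨v, w⟩ = -(Δ cos Δ / sin Δ)(‖v‖² - ⟨v, t̂⟩²)`. -/
theorem stmt11 (L : ℝ) (hL : 0 < L) (pd : Fin 3 → ℝ) (hpd : norm3 pd = L)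
    (p : ℝ → Fin 3 → ℝ) (hp : ∀ t, norm3 (p t) = L) (t₀ : ℝ) (v : Fin 3 → ℝ)
    (hv : HasDerivAt p v t₀) (hc : crossProduct (p t₀) pd ≠ 0) :
    L * angleTo L pd (p t₀) * inner3 v (geoTangentDeriv L pd (p t₀) v) =
      -(angleTo L pd (p t₀) * Real.cos (angleTo L pd (p t₀)) /
          Real.sin (angleTo L pd (p t₀))) *
        (norm3 v ^ 2 - inner3 v (geoTangent L pd (p t₀)) ^ 2) := by
  -- component derivatives
  have hvi : ∀ i, HasDerivAt (fun t => p t i) (v i) t₀ := by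
    intro i
    have h := ((ContinuousLinearMap.proj (R := ℝ) (φ := fun _ : Fin 3 => ℝ)
      i)).hasFDerivAt.comp t₀ hv.hasFDerivAt
    exact hasDerivAt_pi.1 hv i
  -- ⟨v, p t₀⟩ = 0
  have hvp : inner3 v (p t₀) = 0 := by
    have hsum : HasDerivAt (fun t => ∑ i, p t i * p t i)
        (∑ i, (v i * p t₀ i + p t₀ i * v i)) t₀ :=
      HasDerivAt.fun_sum fun i _ => (hvi i).mul (hvi i)
    have hconst : (fun t => ∑ i, p t i * p t i) = fun _ => L ^ 2 := by
      funext t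
      have h1 := hp t
      rw [norm3] at h1
      have h0 : 0 ≤ ∑ i, p t i ^ 2 := Finset.sum_nonneg fun i _ => sq_nonneg _
      calc ∑ i, p t i * p t i = ∑ i, p t i ^ 2 := by simp [sq]
        _ = L ^ 2 := by rw [← h1, Real.sq_sqrt h0]
    rw [hconst] at hsum
    have h0 : (∑ i, (v i * p t₀ i + p t₀ i * v i)) = 0 :=
      hsum.unique (hasDerivAt_const t₀ (L ^ 2))
    have : (2 : ℝ) * inner3 v (p t₀) = 0 := by
      rw [← h0, inner3, Finset.mul_sum]
      exact Finset.sum_congr rfl fun i _ => by ring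
    linarith
  have hnormv : norm3 v ^ 2 = inner3 v v := by
    have h0 : 0 ≤ ∑ i, v i ^ 2 := Finset.sum_nonneg fun i _ => sq_nonneg _
    rw [norm3, Real.sq_sqrt h0]
    simp [inner3, sq]
  set Δ := angleTo L pd (p t₀) with hΔ
  set T := geoTangent L pd (p t₀) with hT
  have hw : inner3 v (geoTangentDeriv L pd (p t₀) v) =
      -(Real.cos Δ / (L * Real.sin Δ)) * (inner3 v v - inner3 v T ^ 2) := by
    rw [geoTangentDeriv, inner3_sub_right, inner3_smul_right, inner3_smul_right,
      inner3_sub_right, inner3_smul_right, hvp]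
    rw [← hΔ, ← hT]
    ring
  rw [hw, hnormv]
  by_cases hs : Real.sin Δ = 0
  · simp [hs]
  · field_simp
end

section
/- Let h_p, h_d > 0 be real numbers and let ε satisfy 0 < ε < 16 h_d / (32 h_p + π² h_d²). Then the 2×2 symmetric matrix Q := [[ε h_p, −ε h_d π / 4], [−ε h_d π / 4, h_d / h_p − 2 ε]] is positive definite. -/
open Matrix Real

/-- Positive definiteness of the matrix `Q` appearing in the Lyapunov derivative
estimate of the outer position loop (Proposition 2). -/
theorem stmt13 (hp hd ε : ℝ) (hhp : 0 < hp) (hhd : 0 < hd)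
    (hε0 : 0 < ε) (hε : ε < 16 * hd / (32 * hp + π ^ 2 * hd ^ 2)) :
    (!![ε * hp, -ε * hd * π / 4; -ε * hd * π / 4, hd / hp - 2 * ε]).PosDef := by
  have hπ : 0 < π := Real.pi_pos
  have hden : 0 < 32 * hp + π ^ 2 * hd ^ 2 := by positivity
  have hkey : ε * (32 * hp + π ^ 2 * hd ^ 2) < 16 * hd := by
    have := (lt_div_iff₀ hden).mp hε
    linarith
  set a : ℝ := ε * hp with ha
  set b : ℝ := -ε * hd * π / 4 with hb
  set c : ℝ := hd / hp - 2 * ε with hc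
  have ha0 : 0 < a := by positivity
  have hdet : 0 < a * c - b * b := by
    have hc' : c = (hd - 2 * ε * hp) / hp := by rw [hc]; field_simp
    have : a * c - b * b = ε * (16 * hd - ε * (32 * hp + π ^ 2 * hd ^ 2)) / 16 := by
      rw [ha, hb, hc']; field_simp; ring
    rw [this]
    have : 0 < 16 * hd - ε * (32 * hp + π ^ 2 * hd ^ 2) := by linarith
    positivity
  rw [posDef_iff_dotProduct_mulVec]
  constructor
  · ext i j
    fin_cases i <;> fin_cases j <;> simp [Matrix.IsHermitian]
  · intro x hx
    have hquad : (star x) ⬝ᵥ ((!![a, b; b, c]) *ᵥ x)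
        = a * (x 0)^2 + 2 * b * (x 0) * (x 1) + c * (x 1)^2 := by
      simp [dotProduct, Matrix.mulVec, Fin.sum_univ_two]
      ring
    have hbb : (!![ε * hp, -ε * hd * π / 4; -ε * hd * π / 4, hd / hp - 2 * ε])
        = !![a, b; b, c] := by rw [ha, hb, hc]
    rw [hbb, hquad]
    rcases (Function.ne_iff).mp hx with ⟨i, hi⟩
    have h1 : x 0 ≠ 0 ∨ x 1 ≠ 0 := by
      fin_cases i
      · exact Or.inl (by simpa using hi)
      · exact Or.inr (by simpa using hi)
    rcases h1 with h | h
    · rcases eq_or_ne (x 1) 0 with h1 | h1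
      · rw [h1]
        nlinarith [mul_pos ha0 (sq_pos_of_ne_zero h)]
      · nlinarith [sq_nonneg (a * x 0 + b * x 1), mul_pos hdet (sq_pos_of_ne_zero h1)]
    · nlinarith [sq_nonneg (a * x 0 + b * x 1), sq_pos_of_ne_zero h, mul_pos hdet (sq_pos_of_ne_zero h)]
end
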